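/- Let b̂ minimize f(b) = l(b) + Σ_{i=1}^p λ_i |b|_{(i)} with l convex and differentiable, λ_1 ≥ ... ≥ λ_p ≥ 0, r = #{i : b̂_i ≠ 0}, and fix a > 0. Define T(a) = U(b̂) + a·b̂ where U(b) = −∇l(b). Then b̂_i ≠ 0 if and only if |T_i(a)| > λ_r. -/

import Mathlib

/-- The `i`-th largest absolute value of the coordinates of `b : Fin p → ℝ`
(0-indexed). -/
noncomputable def sortedAbs {p : ℕ} (b : Fin p → ℝ) (i : Fin p) : ℝ :=
  |b (Tuple.sort (fun j => |b j|) i.rev)|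

/-- `|b|₍ᵢ₎` with 1-based indexing `i ∈ {1,…,p}` (and `0` outside this range). -/
noncomputable def sAbs {p : ℕ} (b : Fin p → ℝ) (i : ℕ) : ℝ :=
  if h : 1 ≤ i ∧ i ≤ p then sortedAbs b ⟨i - 1, by omega⟩ else 0

/-! ### Auxiliary material -/

noncomputable def sortPerm {p : ℕ} (b : Fin p → ℝ) : Equiv.Perm (Fin p) :=
  (Fin.revPerm).trans (Tuple.sort (fun j => |b j|))

lemma sortedAbs_eq {p : ℕ} (b : Fin p → ℝ) (k : Fin p) :
    sortedAbs b k = |b (sortPerm b k)| := rfl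

lemma sortedAbs_antitone {p : ℕ} (b : Fin p → ℝ) : Antitone (sortedAbs b) := by
  intro k k' h
  have := Tuple.monotone_sort (fun j => |b j|) (Fin.rev_le_rev.mpr h)
  simpa [sortedAbs] using this

lemma pen_eq_sum_fin {p : ℕ} (lam : ℕ → ℝ) (b : Fin p → ℝ) :
    ∑ i ∈ Finset.Icc 1 p, lam i * sAbs b i
      = ∑ k : Fin p, lam ((k : ℕ) + 1) * sortedAbs b k := by
  refine Finset.sum_bij' (fun i hi => (⟨i - 1, by simp at hi; omega⟩ : Fin p))
    (fun k _ => (k : ℕ) + 1) ?_ ?_ ?_ ?_ ?_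
  · intro a ha; exact Finset.mem_univ _
  · intro k _; simp [Finset.mem_Icc]
  · intro a ha; simp only [Finset.mem_Icc] at ha; simp; omega
  · intro k _; simp
  · intro a ha
    simp only [Finset.mem_Icc] at ha
    have : a - 1 + 1 = a := by omega
    rw [this, sAbs, dif_pos ha]

lemma val_le_pen {p : ℕ} (lam : ℕ → ℝ)
    (hmono : ∀ i j, 1 ≤ i → i ≤ j → j ≤ p → lam j ≤ lam i)
    (b : Fin p → ℝ) (π : Equiv.Perm (Fin p)) :
    ∑ k : Fin p, lam ((π k : ℕ) + 1) * |b k|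
      ≤ ∑ i ∈ Finset.Icc 1 p, lam i * sAbs b i := by
  rw [pen_eq_sum_fin]
  have hre : ∑ k : Fin p, lam ((π k : ℕ) + 1) * |b k|
      = ∑ k : Fin p, lam ((((sortPerm b).trans π) k : ℕ) + 1) * sortedAbs b k := by
    rw [← Equiv.sum_comp (sortPerm b) (fun k => lam ((π k : ℕ) + 1) * |b k|)]
    simp only [sortedAbs_eq, Equiv.trans_apply]
  rw [hre]
  have hmv : Monovary (fun k : Fin p => lam ((k : ℕ) + 1)) (sortedAbs b) := by
    intro i j hij
    have hji : j ≤ i := by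
      by_contra h
      exact absurd hij (not_lt.mpr (sortedAbs_antitone b (le_of_not_ge h)))
    exact hmono ((j : ℕ) + 1) ((i : ℕ) + 1) (by omega) (by omega) (by omega)
  have := hmv.sum_comp_perm_smul_le_sum_smul (σ := (sortPerm b).trans π)
  simpa [smul_eq_mul] using this

lemma pen_eq_perm {p : ℕ} (lam : ℕ → ℝ) (b : Fin p → ℝ) :
    ∑ i ∈ Finset.Icc 1 p, lam i * sAbs b i
      = ∑ k : Fin p, lam (((sortPerm b).symm k : ℕ) + 1) * |b k| := by
  rw [pen_eq_sum_fin,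
    ← Equiv.sum_comp (sortPerm b) (fun k => lam (((sortPerm b).symm k : ℕ) + 1) * |b k|)]
  simp only [sortedAbs_eq, Equiv.symm_apply_apply]

lemma card_filter_val_lt {p : ℕ} (m : ℕ) (hm : m ≤ p) :
    (Finset.univ.filter (fun k : Fin p => (k : ℕ) < m)).card = m := by
  have : (Finset.univ.filter (fun k : Fin p => (k : ℕ) < m))
      = Finset.univ.map (Fin.castLEEmb hm) := by
    ext k
    simp only [Finset.mem_filter, Finset.mem_univ, true_and, Finset.mem_map]
    constructor
    · intro hk
      exact ⟨⟨(k : ℕ), hk⟩, by ext; simp⟩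
    · rintro ⟨j, rfl⟩
      simp
  rw [this, Finset.card_map, Finset.card_univ, Fintype.card_fin]

lemma sum_split_two {p : ℕ} (f : Fin p → ℝ) (i j : Fin p) (hij : i ≠ j) :
    ∑ k : Fin p, f k = f i + f j + ∑ k ∈ (Finset.univ.erase i).erase j, f k := by
  have h1 : ∑ k : Fin p, f k = f i + ∑ k ∈ Finset.univ.erase i, f k :=
    (Finset.add_sum_erase _ f (Finset.mem_univ i)).symm
  have h2 : ∑ k ∈ Finset.univ.erase i, f k
      = f j + ∑ k ∈ (Finset.univ.erase i).erase j, f k :=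
    (Finset.add_sum_erase _ f (Finset.mem_erase.mpr ⟨hij.symm, Finset.mem_univ j⟩)).symm
  rw [h1, h2]; ring

lemma pen_update_zero {p : ℕ} (lam : ℕ → ℝ)
    (hmono : ∀ i j, 1 ≤ i → i ≤ j → j ≤ p → lam j ≤ lam i)
    (b : Fin p → ℝ) (i : Fin p) (hbi : b i = 0)
    (r : ℕ) (hr : r = (Finset.univ.filter (fun j => b j ≠ 0)).card) (hr1 : 1 ≤ r)
    (t : ℝ) (ht : 0 < t) (htm : ∀ j, b j ≠ 0 → t < |b j|)
    (c : ℝ) (hc : |c| = t) :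
    ∑ i' ∈ Finset.Icc 1 p, lam i' * sAbs (Function.update b i c) i'
      ≤ (∑ i' ∈ Finset.Icc 1 p, lam i' * sAbs b i') + lam r * t := by
  set b' : Fin p → ℝ := Function.update b i c with hb'
  have hb'i : |b' i| = t := by simp [hb', hc]
  have hb'ne : ∀ k, k ≠ i → b' k = b k := fun k hk => Function.update_of_ne hk _ _
  have hrp : r ≤ p := by
    rw [hr]
    exact le_trans (Finset.card_filter_le _ _) (by simp)
  set ρ : Equiv.Perm (Fin p) := (sortPerm b').symm with hρ
  obtain ⟨π, hπi, hπsum⟩ :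
      ∃ π : Equiv.Perm (Fin p), r ≤ (π i : ℕ) + 1 ∧
        ∑ k : Fin p, lam ((ρ k : ℕ) + 1) * |b' k|
          ≤ ∑ k : Fin p, lam ((π k : ℕ) + 1) * |b' k| := by
    by_cases hc1 : r ≤ (ρ i : ℕ) + 1
    · exact ⟨ρ, hc1, le_refl _⟩
    · push_neg at hc1
      have hex : ∃ j, b j ≠ 0 ∧ r ≤ ((ρ j : ℕ) + 1) := by
        by_contra h
        push_neg at h
        have hsub : (Finset.univ.filter (fun j => b j ≠ 0)).image ρ
            ⊆ Finset.univ.filter (fun k : Fin p => (k : ℕ) < r - 1) := by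
          intro k hk
          simp only [Finset.mem_image, Finset.mem_filter, Finset.mem_univ, true_and] at hk ⊢
          obtain ⟨j, hj, rfl⟩ := hk
          have := h j hj
          omega
        have hcard := Finset.card_le_card hsub
        rw [Finset.card_image_of_injective _ ρ.injective,
          card_filter_val_lt (r - 1) (by omega)] at hcard
        omega
      obtain ⟨j, hj0, hjr⟩ := hex
      have hji : j ≠ i := fun h => hj0 (by rw [h, hbi])
      refine ⟨(Equiv.swap i j).trans ρ, ?_, ?_⟩
      · simpa [Equiv.trans_apply, Equiv.swap_apply_left] using hjr
      · rw [sum_split_two (fun k => lam ((ρ k : ℕ) + 1) * |b' k|) i j hji.symm,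
          sum_split_two (fun k => lam (((((Equiv.swap i j).trans ρ)) k : ℕ) + 1) * |b' k|) i j hji.symm]
        have he : ∀ k, k ∈ (Finset.univ.erase i).erase j →
            lam ((((Equiv.swap i j).trans ρ) k : ℕ) + 1) * |b' k|
              = lam ((ρ k : ℕ) + 1) * |b' k| := by
          intro k hk
          simp only [Finset.mem_erase] at hk
          rw [Equiv.trans_apply, Equiv.swap_apply_of_ne_of_ne hk.2.1 hk.1]
        rw [Finset.sum_congr rfl he]
        simp only [Equiv.trans_apply, Equiv.swap_apply_left, Equiv.swap_apply_right]
        have h1 : lam ((ρ j : ℕ) + 1) ≤ lam ((ρ i : ℕ) + 1) :=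
          hmono ((ρ i : ℕ) + 1) ((ρ j : ℕ) + 1) (by omega) (by omega) (by omega)
        have h2 : |b' i| < |b' j| := by
          rw [hb'i, hb'ne j hji]
          exact htm j hj0
        nlinarith
  have hπip : (π i : ℕ) + 1 ≤ p := by omega
  have hsplit : ∑ k : Fin p, lam ((π k : ℕ) + 1) * |b' k|
      = lam ((π i : ℕ) + 1) * t + ∑ k ∈ Finset.univ.erase i, lam ((π k : ℕ) + 1) * |b' k| := by
    rw [← Finset.add_sum_erase _ _ (Finset.mem_univ i), hb'i]
  have herase : ∑ k ∈ Finset.univ.erase i, lam ((π k : ℕ) + 1) * |b' k|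
      = ∑ k : Fin p, lam ((π k : ℕ) + 1) * |b k| := by
    rw [← Finset.add_sum_erase _ (fun k => lam ((π k : ℕ) + 1) * |b k|) (Finset.mem_univ i),
      hbi]
    simp only [abs_zero, mul_zero, zero_add]
    exact Finset.sum_congr rfl fun k hk => by
      rw [hb'ne k (Finset.mem_erase.mp hk).1]
  have hlam : lam ((π i : ℕ) + 1) ≤ lam r := hmono r ((π i : ℕ) + 1) hr1 hπi hπip
  calc ∑ i' ∈ Finset.Icc 1 p, lam i' * sAbs b' i'
      = ∑ k : Fin p, lam ((ρ k : ℕ) + 1) * |b' k| := pen_eq_perm lam b'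
    _ ≤ ∑ k : Fin p, lam ((π k : ℕ) + 1) * |b' k| := hπsum
    _ = lam ((π i : ℕ) + 1) * t + ∑ k : Fin p, lam ((π k : ℕ) + 1) * |b k| := by
        rw [hsplit, herase]
    _ ≤ (∑ i' ∈ Finset.Icc 1 p, lam i' * sAbs b i') + lam r * t := by
        have := val_le_pen lam hmono b π
        have hl : lam ((π i : ℕ) + 1) * t ≤ lam r * t :=
          mul_le_mul_of_nonneg_right hlam ht.le
        linarith

lemma pen_update_nonzero {p : ℕ} (lam : ℕ → ℝ)
    (hmono : ∀ i j, 1 ≤ i → i ≤ j → j ≤ p → lam j ≤ lam i)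
    (b : Fin p → ℝ) (i : Fin p) (hbi : b i ≠ 0)
    (r : ℕ) (hr : r = (Finset.univ.filter (fun j => b j ≠ 0)).card) (hr1 : 1 ≤ r)
    (t : ℝ) (ht : 0 < t) (htv : t < |b i|)
    (c : ℝ) (hc : |c| = |b i| - t) :
    ∑ i' ∈ Finset.Icc 1 p, lam i' * sAbs (Function.update b i c) i'
      ≤ (∑ i' ∈ Finset.Icc 1 p, lam i' * sAbs b i') - lam r * t := by
  set b' : Fin p → ℝ := Function.update b i c with hb'
  have hb'i : |b' i| = |b i| - t := by simp [hb', hc]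
  have hb'ne : ∀ k, k ≠ i → b' k = b k := fun k hk => Function.update_of_ne hk _ _
  have hb'i0 : b' i ≠ 0 := by
    intro h
    rw [h, abs_zero] at hb'i
    linarith
  have hsupp : (Finset.univ.filter (fun j => b' j ≠ 0))
      = (Finset.univ.filter (fun j => b j ≠ 0)) := by
    ext k
    simp only [Finset.mem_filter, Finset.mem_univ, true_and]
    by_cases hk : k = i
    · subst hk; simp [hb'i0, hbi]
    · rw [hb'ne k hk]
  have hrp : r ≤ p := by
    rw [hr]
    exact le_trans (Finset.card_filter_le _ _) (by simp)
  set ρ : Equiv.Perm (Fin p) := (sortPerm b').symm with hρ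
  obtain ⟨π, hπi, hπsum⟩ :
      ∃ π : Equiv.Perm (Fin p), (π i : ℕ) + 1 ≤ r ∧
        ∑ k : Fin p, lam ((ρ k : ℕ) + 1) * |b' k|
          ≤ ∑ k : Fin p, lam ((π k : ℕ) + 1) * |b' k| := by
    by_cases hc1 : (ρ i : ℕ) + 1 ≤ r
    · exact ⟨ρ, hc1, le_refl _⟩
    · push_neg at hc1
      have hex : ∃ j, b' j = 0 ∧ ((ρ j : ℕ)) < r := by
        by_contra h
        push_neg at h
        have hsub : (Finset.univ.filter (fun j => (ρ j : ℕ) < r))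
            ⊆ (Finset.univ.filter (fun j => b' j ≠ 0)).erase i := by
          intro k hk
          simp only [Finset.mem_filter, Finset.mem_univ, true_and] at hk
          refine Finset.mem_erase.mpr ⟨?_, ?_⟩
          · rintro rfl; omega
          · simp only [Finset.mem_filter, Finset.mem_univ, true_and]
            intro h0
            have := h k h0
            omega
        have hcard := Finset.card_le_card hsub
        have hK : (Finset.univ.filter (fun j => (ρ j : ℕ) < r)).card = r := by
          have himg : (Finset.univ.filter (fun j => (ρ j : ℕ) < r)).image ρ
              = Finset.univ.filter (fun k : Fin p => (k : ℕ) < r) := by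
            ext k
            simp only [Finset.mem_image, Finset.mem_filter, Finset.mem_univ, true_and]
            constructor
            · rintro ⟨j, hj, rfl⟩; exact hj
            · intro hk; exact ⟨ρ.symm k, by simpa using hk, by simp⟩
          have := congrArg Finset.card himg
          rwa [Finset.card_image_of_injective _ ρ.injective,
            card_filter_val_lt r hrp] at this
        rw [hK, Finset.card_erase_of_mem, hsupp, ← hr] at hcard
        · omega
        · simp only [Finset.mem_filter, Finset.mem_univ, true_and]
          exact hb'i0
      obtain ⟨j, hj0, hjr⟩ := hex
      have hji : j ≠ i := fun h => hb'i0 (by rw [← h, hj0])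
      refine ⟨(Equiv.swap i j).trans ρ, ?_, ?_⟩
      · have : ((Equiv.swap i j).trans ρ) i = ρ j := by
          rw [Equiv.trans_apply, Equiv.swap_apply_left]
        rw [this]; omega
      · rw [sum_split_two (fun k => lam ((ρ k : ℕ) + 1) * |b' k|) i j hji.symm,
          sum_split_two (fun k => lam (((((Equiv.swap i j).trans ρ)) k : ℕ) + 1) * |b' k|) i j hji.symm]
        have he : ∀ k, k ∈ (Finset.univ.erase i).erase j →
            lam ((((Equiv.swap i j).trans ρ) k : ℕ) + 1) * |b' k|
              = lam ((ρ k : ℕ) + 1) * |b' k| := by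
          intro k hk
          simp only [Finset.mem_erase] at hk
          rw [Equiv.trans_apply, Equiv.swap_apply_of_ne_of_ne hk.2.1 hk.1]
        rw [Finset.sum_congr rfl he]
        simp only [Equiv.trans_apply, Equiv.swap_apply_left, Equiv.swap_apply_right]
        have h1 : lam ((ρ i : ℕ) + 1) ≤ lam ((ρ j : ℕ) + 1) :=
          hmono ((ρ j : ℕ) + 1) ((ρ i : ℕ) + 1) (by omega) (by omega) (by omega)
        have h2 : |b' j| = 0 := by rw [hj0, abs_zero]
        have h3 : 0 < |b' i| := by rw [hb'i]; linarith
        nlinarith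
  have hπ1 : 1 ≤ (π i : ℕ) + 1 := by omega
  have hlam : lam r ≤ lam ((π i : ℕ) + 1) := hmono ((π i : ℕ) + 1) r hπ1 hπi hrp
  have hsplit : ∑ k : Fin p, lam ((π k : ℕ) + 1) * |b' k|
      = ∑ k : Fin p, lam ((π k : ℕ) + 1) * |b k| - lam ((π i : ℕ) + 1) * t := by
    rw [← Finset.add_sum_erase _ (fun k => lam ((π k : ℕ) + 1) * |b' k|) (Finset.mem_univ i),
      ← Finset.add_sum_erase _ (fun k => lam ((π k : ℕ) + 1) * |b k|) (Finset.mem_univ i),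
      hb'i]
    have : ∑ k ∈ Finset.univ.erase i, lam ((π k : ℕ) + 1) * |b' k|
        = ∑ k ∈ Finset.univ.erase i, lam ((π k : ℕ) + 1) * |b k| :=
      Finset.sum_congr rfl fun k hk => by rw [hb'ne k (Finset.mem_erase.mp hk).1]
    rw [this]; ring
  calc ∑ i' ∈ Finset.Icc 1 p, lam i' * sAbs b' i'
      = ∑ k : Fin p, lam ((ρ k : ℕ) + 1) * |b' k| := pen_eq_perm lam b'
    _ ≤ ∑ k : Fin p, lam ((π k : ℕ) + 1) * |b' k| := hπsum
    _ = ∑ k : Fin p, lam ((π k : ℕ) + 1) * |b k| - lam ((π i : ℕ) + 1) * t := hsplit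
    _ ≤ (∑ i' ∈ Finset.Icc 1 p, lam i' * sAbs b i') - lam r * t := by
        have := val_le_pen lam hmono b π
        have hl : lam r * t ≤ lam ((π i : ℕ) + 1) * t :=
          mul_le_mul_of_nonneg_right hlam ht.le
        linarith

lemma deriv_ge_of_slope (φ : ℝ → ℝ) (D lb ε : ℝ) (hε : 0 < ε)
    (hD : HasDerivAt φ D 0)
    (h : ∀ t : ℝ, 0 < t → t < ε → lb * t ≤ φ t - φ 0) : lb ≤ D := by
  have h1 : Filter.Tendsto (slope φ 0) (nhdsWithin 0 (Set.Ioi 0)) (nhds D) :=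
    (hasDerivAt_iff_tendsto_slope.mp hD).mono_left
      (nhdsWithin_mono 0 (fun x hx => Set.mem_compl_singleton_iff.mpr (ne_of_gt hx)))
  refine ge_of_tendsto h1 ?_
  filter_upwards [Ioo_mem_nhdsGT_of_mem (Set.left_mem_Ico.mpr hε)] with t ht
  have ht0 : 0 < t := ht.1
  have := h t ht.1 ht.2
  rw [slope_def_field, le_div_iff₀ (by linarith : (0:ℝ) < t - 0)]
  linarith

lemma hasDerivAt_line {p : ℕ} (l : (Fin p → ℝ) → ℝ) (hdiff : Differentiable ℝ l)
    (b : Fin p → ℝ) (w : Fin p → ℝ) :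
    HasDerivAt (fun t : ℝ => l (b + t • w)) (fderiv ℝ l b w) 0 := by
  have h1 : HasDerivAt (fun t : ℝ => b + t • w) w 0 := by
    simpa using ((hasDerivAt_id (0 : ℝ)).smul_const w).const_add b
  have h2 : HasFDerivAt l (fderiv ℝ l b) (b + (0 : ℝ) • w) := by
    simpa using (hdiff b).hasFDerivAt
  simpa [Function.comp_def] using h2.comp_hasDerivAt 0 h1

lemma update_eq_add {p : ℕ} (b : Fin p → ℝ) (i : Fin p) (c t : ℝ) :
    Function.update b i (b i + t * c) = b + t • (c • (Pi.single i 1 : Fin p → ℝ)) := by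
  funext k
  by_cases hk : k = i
  · subst hk
    simp [Function.update_self, Pi.single_apply]
  · simp [Function.update_of_ne hk, Pi.single_apply, hk]

/-- at a minimizer `b̂` of `l(b) + ∑ λᵢ |b|₍ᵢ₎` with `r ≥ 1`
nonzero entries, for `a > 0` and `T(a) = U(b̂) + a b̂` (`U(b) = -∇l(b)`) one has
`b̂ᵢ ≠ 0 ↔ |Tᵢ(a)| > λ_r`. -/
theorem slope_support_characterization {p : ℕ} (l : (Fin p → ℝ) → ℝ)
    (hconv : ConvexOn ℝ Set.univ l) (hdiff : Differentiable ℝ l)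
    (lam : ℕ → ℝ)
    (hmono : ∀ i j, 1 ≤ i → i ≤ j → j ≤ p → lam j ≤ lam i)
    (hnonneg : ∀ i, 1 ≤ i → i ≤ p → 0 ≤ lam i)
    (bhat : Fin p → ℝ)
    (hmin : ∀ b, l bhat + ∑ i ∈ Finset.Icc 1 p, lam i * sAbs bhat i ≤
                 l b + ∑ i ∈ Finset.Icc 1 p, lam i * sAbs b i)
    (r : ℕ) (hr : r = (Finset.univ.filter (fun i => bhat i ≠ 0)).card)
    (hr1 : 1 ≤ r)
    (U : Fin p → ℝ) (hU : ∀ i, U i = -(fderiv ℝ l bhat (Pi.single i 1)))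
    (a : ℝ) (ha : 0 < a) (T : Fin p → ℝ) (hT : ∀ i, T i = U i + a * bhat i)
    (i : Fin p) :
    bhat i ≠ 0 ↔ lam r < |T i| := by
  by_cases hbi : bhat i = 0
  · -- zero case: show |U i| ≤ lam r
    set nz := Finset.univ.filter (fun j => bhat j ≠ 0) with hnz
    have hne : nz.Nonempty := Finset.card_pos.mp (by omega)
    have hneim : (nz.image (fun j => |bhat j|)).Nonempty := hne.image _
    set m := (nz.image (fun j => |bhat j|)).min' hneim with hm
    have hm0 : 0 < m := by
      obtain ⟨j, hj, hjm⟩ := Finset.mem_image.mp ((nz.image (fun j => |bhat j|)).min'_mem hneim)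
      rw [hm, ← hjm]
      simp only [hnz, Finset.mem_filter, Finset.mem_univ, true_and] at hj
      exact abs_pos.mpr hj
    have hmle : ∀ j, bhat j ≠ 0 → m ≤ |bhat j| := fun j hj =>
      Finset.min'_le _ _ (Finset.mem_image_of_mem _ (by simp [hnz, hj]))
    have key : ∀ s : ℝ, |s| = 1 → s * U i ≤ lam r := by
      intro s hs
      set w : Fin p → ℝ := s • (Pi.single i 1 : Fin p → ℝ) with hw
      have hD := hasDerivAt_line l hdiff bhat w
      have hDval : fderiv ℝ l bhat w = -(s * U i) := by
        rw [hw, map_smul, hU i, smul_eq_mul]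
        ring
      have hbnd : -lam r ≤ fderiv ℝ l bhat w := by
        refine deriv_ge_of_slope _ _ _ m hm0 hD ?_
        intro t ht0 htm'
        show -lam r * t ≤ l (bhat + t • w) - l (bhat + (0 : ℝ) • w)
        have hupd : bhat + t • w = Function.update bhat i (bhat i + t * s) :=
          (update_eq_add bhat i s t).symm
        have hc : |bhat i + t * s| = t := by
          rw [hbi, zero_add, abs_mul, hs, mul_one, abs_of_pos ht0]
        have hpen := pen_update_zero lam hmono bhat i hbi r hr hr1 t ht0
          (fun j hj => lt_of_lt_of_le htm' (hmle j hj)) (bhat i + t * s) hc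
        have hmin' := hmin (Function.update bhat i (bhat i + t * s))
        rw [hupd, show bhat + (0 : ℝ) • w = bhat by simp]
        linarith
      rw [hDval] at hbnd
      linarith
    have h1 := key 1 (by norm_num)
    have h2 := key (-1) (by norm_num)
    constructor
    · intro h; exact absurd hbi h
    · intro h
      exfalso
      rw [hT i, hbi, mul_zero, add_zero] at h
      have : |U i| ≤ lam r := abs_le.mpr ⟨by linarith, by linarith⟩
      exact absurd h (not_lt.mpr this)
  · -- nonzero case
    have hv0 : 0 < |bhat i| := abs_pos.mpr hbi
    set s : ℝ := if 0 < bhat i then 1 else -1 with hsdef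
    have habs_s : |s| = 1 := by rw [hsdef]; split <;> norm_num
    have hss : s * s = 1 := by rw [hsdef]; split <;> norm_num
    have hsb : s * bhat i = |bhat i| := by
      rw [hsdef]
      rcases lt_trichotomy (bhat i) 0 with h | h | h
      · rw [if_neg (by linarith), abs_of_neg h]; ring
      · exact absurd h hbi
      · rw [if_pos h, abs_of_pos h]; ring
    have hbs : bhat i = s * |bhat i| := by
      calc bhat i = s * (s * bhat i) := by rw [← mul_assoc, hss, one_mul]
        _ = s * |bhat i| := by rw [hsb]
    set w : Fin p → ℝ := (-s) • (Pi.single i 1 : Fin p → ℝ) with hw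
    have hD := hasDerivAt_line l hdiff bhat w
    have hDval : fderiv ℝ l bhat w = s * U i := by
      rw [hw, map_smul, hU i, smul_eq_mul]
      ring
    have hbnd : lam r ≤ fderiv ℝ l bhat w := by
      refine deriv_ge_of_slope _ _ _ (|bhat i|) hv0 hD ?_
      intro t ht0 htv
      show lam r * t ≤ l (bhat + t • w) - l (bhat + (0 : ℝ) • w)
      have hupd : bhat + t • w = Function.update bhat i (bhat i + t * (-s)) :=
        (update_eq_add bhat i (-s) t).symm
      have hc : |bhat i + t * (-s)| = |bhat i| - t := by
        have heq : bhat i + t * (-s) = s * (|bhat i| - t) := by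
          conv_lhs => rw [hbs]
          ring
        rw [heq, abs_mul, habs_s, one_mul, abs_of_nonneg (by linarith)]
      have hpen := pen_update_nonzero lam hmono bhat i hbi r hr hr1 t ht0 htv
        (bhat i + t * (-s)) hc
      have hmin' := hmin (Function.update bhat i (bhat i + t * (-s)))
      rw [hupd, show bhat + (0 : ℝ) • w = bhat by simp]
      linarith
    rw [hDval] at hbnd
    constructor
    · intro _
      have hTs : s * T i = s * U i + a * |bhat i| := by
        calc s * T i = s * U i + a * (s * bhat i) := by rw [hT i]; ring
          _ = s * U i + a * |bhat i| := by rw [hsb]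
      have hlt : lam r < s * T i := by
        have := mul_pos ha hv0
        linarith
      have hle : s * T i ≤ |T i| := by
        calc s * T i ≤ |s * T i| := le_abs_self _
          _ = |s| * |T i| := abs_mul _ _
          _ = |T i| := by rw [habs_s, one_mul]
      linarith
    · intro _; exact hbi
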